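/- Let A_a ∈ ℝ^{p×p}, A_f ∈ ℝ^{q×q}, A_fa ∈ ℝ^{q×p}, B_a ∈ ℝ^{p×m}, and set A* = [[A_a, 0],[A_fa, A_f]] ∈ ℝ^{(p+q)×(p+q)} and B* = [B_a; 0] ∈ ℝ^{(p+q)×m}. If the pair (A*, B*) is controllable, then the pair (A_a, B_a) is controllable and the pair (A_f, A_fa) is controllable. -/

import Mathlib

open Matrix

/-- The `K`-step controllability matrix `[B, AB, A²B, …, A^{K-1}B]` of the pair `(A, B)`. -/
def ctrbMat {s m : Type*} [Fintype s] [DecidableEq s]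
    (A : Matrix s s ℝ) (B : Matrix s m ℝ) (K : ℕ) : Matrix s (Fin K × m) ℝ :=
  Matrix.of fun i km => (A ^ (km.1 : ℕ) * B) i km.2

/-- The pair `(A, B)` is controllable if its `s`-step controllability matrix has full
row rank `s` (where `s` is the state dimension). -/
def IsControllable {s m : Type*} [Fintype s] [DecidableEq s] [Fintype m]
    (A : Matrix s s ℝ) (B : Matrix s m ℝ) : Prop :=
  (ctrbMat A B (Fintype.card s)).rank = Fintype.card s

/-- Full row rank iff trivial left kernel. -/
lemma rank_eq_card_iff_vecMul {s t : Type*} [Fintype s] [Fintype t] [DecidableEq s]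
    (M : Matrix s t ℝ) :
    M.rank = Fintype.card s ↔ ∀ v : s → ℝ, v ᵥ* M = 0 → v = 0 := by
  have h1 : M.rank = Fintype.card s ↔ LinearIndependent ℝ (fun i => M i) := by
    rw [Matrix.rank_eq_finrank_span_row, linearIndependent_iff_card_eq_finrank_span, Set.finrank,
      eq_comm]
    rfl
  rw [h1]
  change LinearIndependent ℝ M.row ↔ _
  rw [← Matrix.vecMul_injective_iff]
  constructor
  · intro hinj v hv
    apply hinj
    show v ᵥ* M = 0 ᵥ* M
    rw [hv, Matrix.zero_vecMul]
  · intro hker v w hvw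
    have hvw' : v ᵥ* M = w ᵥ* M := hvw
    have h0 : (v - w) ᵥ* M = 0 := by rw [Matrix.sub_vecMul, hvw', sub_self]
    exact sub_eq_zero.mp (hker _ h0)

lemma vecMul_finset_sum {s t ι : Type*} [Fintype s] (fs : Finset ι)
    (f : ι → Matrix s t ℝ) (u : s → ℝ) :
    u ᵥ* (∑ i ∈ fs, f i) = ∑ i ∈ fs, u ᵥ* f i := by
  ext j
  simp [Matrix.vecMul, dotProduct, Matrix.sum_apply, Finset.mul_sum]
  rw [Finset.sum_comm]

lemma vecMul_smul_matrix {s t : Type*} [Fintype s] (c : ℝ) (M : Matrix s t ℝ) (u : s → ℝ) :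
    u ᵥ* (c • M) = c • (u ᵥ* M) := by
  ext j
  simp [Matrix.vecMul, dotProduct, Finset.mul_sum, mul_left_comm]

/-- Cayley–Hamilton: if `u` kills `A^i * B` for `i < n`, it kills all powers. -/
lemma vecMul_pow_mul_eq_zero {n : ℕ} {m : Type*} [Fintype m]
    (A : Matrix (Fin n) (Fin n) ℝ) (B : Matrix (Fin n) m ℝ) (u : Fin n → ℝ)
    (hu : ∀ i < n, u ᵥ* (A ^ i * B) = 0) (k : ℕ) :
    u ᵥ* (A ^ k * B) = 0 := by
  rcases Nat.eq_zero_or_pos n with hn | hn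
  · subst hn
    funext j
    simp [Matrix.vecMul, dotProduct]
  · have hM : (Matrix.charpoly A).Monic := Matrix.charpoly_monic A
    set r : Polynomial ℝ := (Polynomial.X ^ k) %ₘ Matrix.charpoly A with hr
    have h2 : (Matrix.charpoly A).degree = (n : ℕ) := by
      rw [Polynomial.degree_eq_natDegree hM.ne_zero, Matrix.charpoly_natDegree_eq_dim]
      simp
    have hdeg : r.natDegree < n := by
      rcases eq_or_ne r 0 with h | h
      · simpa [h] using hn
      · rw [Polynomial.natDegree_lt_iff_degree_lt h, ← h2]
        exact Polynomial.degree_modByMonic_lt _ hM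
    have hAk : A ^ k = Polynomial.aeval A r := by
      have hd := Polynomial.modByMonic_add_div (Polynomial.X ^ k : Polynomial ℝ) (Matrix.charpoly A)
      have := congrArg (Polynomial.aeval A) hd
      simp only [map_add, _root_.map_mul, Matrix.aeval_self_charpoly, zero_mul, add_zero, map_pow,
        Polynomial.aeval_X] at this
      rw [this]
    rw [hAk, Polynomial.aeval_eq_sum_range' hdeg, Matrix.sum_mul, vecMul_finset_sum]
    apply Finset.sum_eq_zero
    intro i hi
    rw [Matrix.smul_mul, vecMul_smul_matrix, hu i (Finset.mem_range.mp hi), smul_zero]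


lemma vecMul_ctrbMat_eq_zero_iff {s m : Type*} [Fintype s] [DecidableEq s] [Fintype m]
    (A : Matrix s s ℝ) (B : Matrix s m ℝ) (K : ℕ) (v : s → ℝ) :
    v ᵥ* ctrbMat A B K = 0 ↔ ∀ k : Fin K, v ᵥ* (A ^ (k : ℕ) * B) = 0 := by
  constructor
  · intro h k
    funext j
    have := congrFun h (k, j)
    simpa [ctrbMat, Matrix.vecMul, dotProduct] using this
  · intro h
    funext kj
    have := congrFun (h kj.1) kj.2
    simpa [ctrbMat, Matrix.vecMul, dotProduct] using this

lemma cascade_pow {p q : ℕ} (Aa : Matrix (Fin p) (Fin p) ℝ) (Af : Matrix (Fin q) (Fin q) ℝ)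
    (Afa : Matrix (Fin q) (Fin p) ℝ) (u : Fin q → ℝ)
    (hu : ∀ i, u ᵥ* (Af ^ i * Afa) = 0) (k : ℕ) :
    ∃ C, (fromBlocks Aa 0 Afa Af) ^ k = fromBlocks (Aa ^ k) 0 C (Af ^ k) ∧ u ᵥ* C = 0 := by
  induction k with
  | zero =>
    refine ⟨0, ?_, ?_⟩
    · simp [Matrix.fromBlocks_one]
    · simp
  | succ k ih =>
    obtain ⟨C, hC, hC0⟩ := ih
    refine ⟨C * Aa + Af ^ k * Afa, ?_, ?_⟩
    · rw [pow_succ, hC, Matrix.fromBlocks_multiply]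
      simp [pow_succ]
    · rw [Matrix.vecMul_add, ← Matrix.vecMul_vecMul, hC0, Matrix.zero_vecMul, hu k, add_zero]

/-- **Necessity of subsystem controllability for the cascade.** If the cascade pair
`(A*, B*) = ([[A_a,0],[A_fa,A_f]], [B_a;0])` is controllable, then both `(A_a, B_a)`
and `(A_f, A_fa)` are controllable. -/
theorem cascade_controllable_imp_subsystems
    {p q m : ℕ}
    (Aa : Matrix (Fin p) (Fin p) ℝ) (Af : Matrix (Fin q) (Fin q) ℝ)
    (Afa : Matrix (Fin q) (Fin p) ℝ) (Ba : Matrix (Fin p) (Fin m) ℝ)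
    (h : IsControllable (fromBlocks Aa 0 Afa Af) (fromRows Ba 0)) :
    IsControllable Aa Ba ∧ IsControllable Af Afa := by
  rw [IsControllable, rank_eq_card_iff_vecMul] at h
  constructor
  · rw [IsControllable, rank_eq_card_iff_vecMul]
    intro u hu0
    have hu : ∀ i, u ᵥ* (Aa ^ i * Ba) = 0 := by
      apply vecMul_pow_mul_eq_zero
      intro i hi
      have := (vecMul_ctrbMat_eq_zero_iff Aa Ba _ u).mp hu0 ⟨i, by simpa using hi⟩
      simpa using this
    have hv : (Sum.elim u 0) ᵥ*
        ctrbMat (fromBlocks Aa 0 Afa Af) (fromRows Ba 0) (Fintype.card (Fin p ⊕ Fin q)) = 0 := by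
      rw [vecMul_ctrbMat_eq_zero_iff]
      intro k
      obtain ⟨C, hC, -⟩ := cascade_pow Aa Af Afa (0 : Fin q → ℝ) (fun i => by simp) (k : ℕ)
      rw [hC, Matrix.fromBlocks_mul_fromRows, Matrix.sumElim_vecMul_fromRows]
      simp [hu (k : ℕ)]
    have h0 := h _ hv
    funext i
    exact congrFun h0 (Sum.inl i)
  · rw [IsControllable, rank_eq_card_iff_vecMul]
    intro u hu0
    have hu : ∀ i, u ᵥ* (Af ^ i * Afa) = 0 := by
      apply vecMul_pow_mul_eq_zero
      intro i hi
      have := (vecMul_ctrbMat_eq_zero_iff Af Afa _ u).mp hu0 ⟨i, by simpa using hi⟩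
      simpa using this
    have hv : (Sum.elim 0 u) ᵥ*
        ctrbMat (fromBlocks Aa 0 Afa Af) (fromRows Ba 0) (Fintype.card (Fin p ⊕ Fin q)) = 0 := by
      rw [vecMul_ctrbMat_eq_zero_iff]
      intro k
      obtain ⟨C, hC, hC0⟩ := cascade_pow Aa Af Afa u hu (k : ℕ)
      rw [hC, Matrix.fromBlocks_mul_fromRows, Matrix.sumElim_vecMul_fromRows]
      simp [Matrix.vecMul_add, ← Matrix.vecMul_vecMul, hC0]
    have h0 := h _ hv
    funext i
    exact congrFun h0 (Sum.inr i)
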